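/- Let T be a contraction on H, F₁,…,F₆ bounded operators on 𝒟_T with w(Fᵢ + F*_{7−i} z) ≤ 1 for all z ∈ 𝕋 and each i, and define on H ⊕ H²(𝒟_T) the operators V⁽ⁱ⁾ = (Tᵢ 0; F*_{7−i}D_T M_{Fᵢ + F*_{7−i}z}) and V⁽⁷⁾ = (T 0; D_T M_z), where Tᵢ − T*_{7−i}T = D_T Fᵢ D_T. Then V⁽⁷⁾ is an isometry and V⁽ⁱ⁾ = V⁽⁷⁻ⁱ⁾* V⁽⁷⁾ for each 1 ≤ i ≤ 6. -/

import Mathlib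

open ContinuousLinearMap Filter Topology

/-- The numerical radius `w(T) = sup_{‖x‖ ≤ 1} ‖⟨T x, x⟩‖`. -/
noncomputable def numRadius {H : Type*} [NormedAddCommGroup H] [InnerProductSpace ℂ H]
    (T : H →L[ℂ] H) : ℝ :=
  sSup {r : ℝ | ∃ x : H, ‖x‖ ≤ 1 ∧ r = ‖(inner ℂ (T x) x : ℂ)‖}

/-- The index pairing `i ↔ 7 - i` on `{1, …, 6}`, realized on `Fin 6`. -/
def rev (i : Fin 6) : Fin 6 := ⟨5 - i.1, by omega⟩

section aux
variable {H : Type*} [NormedAddCommGroup H] [InnerProductSpace ℂ H] [CompleteSpace H]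

lemma summable_inner_op (A : H →L[ℂ] H) (f g : lp (fun _ : ℕ => H) 2) :
    Summable fun n => (inner ℂ (A (f n)) (g n) : ℂ) := by
  refine Summable.of_norm_bounded (g := fun n => ‖A‖ * (‖f n‖ * ‖g n‖)) ?_ ?_
  · exact (lp.summable_mul (by rw [Real.holderConjugate_iff]; norm_num) f g).mul_left _
  · intro n
    calc ‖(inner ℂ (A (f n)) (g n) : ℂ)‖ ≤ ‖A (f n)‖ * ‖g n‖ := norm_inner_le_norm _ _
    _ ≤ (‖A‖ * ‖f n‖) * ‖g n‖ := by gcongr; exact A.le_opNorm _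
    _ = _ := by ring

end aux

set_option maxHeartbeats 1600000 in
/-- Schäffer-type dilation: let `T = T₇` be a contraction on a complex Hilbert space `H`
with defect operator `D = D_{T₇}`, and `T₁, …, T₆` bounded operators satisfying the
fundamental equations `Tᵢ - T*_{7-i} T₇ = D Fᵢ D` with `w(Fᵢ + F*_{7-i} z) ≤ 1` on `𝕋`.
On the model space `H ⊕ H²(𝒟_{T₇})` (realized as `WithLp 2 (H × ℓ²(ℕ, H))`) consider the
block operators `V⁽⁷⁾ = (T 0; D M_z)` and `V⁽ⁱ⁾ = (Tᵢ 0; F*_{7-i}D M_{Fᵢ + F*_{7-i}z})`,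
described coefficient-wise below.  Then `V⁽⁷⁾` is an isometry and
`V⁽ⁱ⁾ = V⁽⁷⁻ⁱ⁾* V⁽⁷⁾` for every `1 ≤ i ≤ 6`. -/
theorem schaffer_blocks {H : Type*} [NormedAddCommGroup H] [InnerProductSpace ℂ H]
    [CompleteSpace H] (T D : H →L[ℂ] H) (hT : ‖T‖ ≤ 1)
    (hD : D.IsPositive) (hD2 : D * D = 1 - adjoint T * T)
    (Top F : Fin 6 → (H →L[ℂ] H))
    (hw : ∀ (i : Fin 6) (z : ℂ), ‖z‖ = 1 →
      numRadius (F i + z • adjoint (F (rev i))) ≤ 1)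
    (hfund : ∀ i, Top i - adjoint (Top (rev i)) * T = D * F i * D)
    (V7 : WithLp 2 (H × lp (fun _ : ℕ => H) 2) →L[ℂ] WithLp 2 (H × lp (fun _ : ℕ => H) 2))
    (hV7a : ∀ x : WithLp 2 (H × lp (fun _ : ℕ => H) 2),
      (WithLp.equiv 2 _ (V7 x)).1 = T (WithLp.equiv 2 _ x).1)
    (hV7b : ∀ x : WithLp 2 (H × lp (fun _ : ℕ => H) 2),
      ((WithLp.equiv 2 _ (V7 x)).2) 0 = D (WithLp.equiv 2 _ x).1)
    (hV7c : ∀ (x : WithLp 2 (H × lp (fun _ : ℕ => H) 2)) (n : ℕ),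
      ((WithLp.equiv 2 _ (V7 x)).2) (n + 1) = ((WithLp.equiv 2 _ x).2) n)
    (V : Fin 6 →
      (WithLp 2 (H × lp (fun _ : ℕ => H) 2) →L[ℂ] WithLp 2 (H × lp (fun _ : ℕ => H) 2)))
    (hVa : ∀ (i : Fin 6) (x : WithLp 2 (H × lp (fun _ : ℕ => H) 2)),
      (WithLp.equiv 2 _ (V i x)).1 = Top i (WithLp.equiv 2 _ x).1)
    (hVb : ∀ (i : Fin 6) (x : WithLp 2 (H × lp (fun _ : ℕ => H) 2)),
      ((WithLp.equiv 2 _ (V i x)).2) 0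
        = adjoint (F (rev i)) (D (WithLp.equiv 2 _ x).1)
          + F i (((WithLp.equiv 2 _ x).2) 0))
    (hVc : ∀ (i : Fin 6) (x : WithLp 2 (H × lp (fun _ : ℕ => H) 2)) (n : ℕ),
      ((WithLp.equiv 2 _ (V i x)).2) (n + 1)
        = F i (((WithLp.equiv 2 _ x).2) (n + 1))
          + adjoint (F (rev i)) (((WithLp.equiv 2 _ x).2) n)) :
    (∀ x, ‖V7 x‖ = ‖x‖) ∧ ∀ i : Fin 6, V i = adjoint (V (rev i)) ∘L V7 := by
  have hDadj : ContinuousLinearMap.adjoint D = D := hD.isSelfAdjoint.adjoint_eq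
  constructor
  · intro x
    have ha := hV7a x
    have hb := hV7b x
    have hc := hV7c x
    simp only [WithLp.equiv_apply, WithLp.ofLp_fst, WithLp.ofLp_snd] at ha hb hc
    have hlp : (inner ℂ ((V7 x).snd) ((V7 x).snd) : ℂ)
        = inner ℂ (D x.fst) (D x.fst) + inner ℂ x.snd x.snd := by
      rw [lp.inner_eq_tsum, (lp.summable_inner (𝕜 := ℂ) (V7 x).snd (V7 x).snd).tsum_eq_zero_add, hb]
      congr 1
      rw [lp.inner_eq_tsum]
      exact tsum_congr fun n => by rw [hc n]
    have key : (inner ℂ (V7 x) (V7 x) : ℂ) = inner ℂ x x := by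
      rw [WithLp.prod_inner_apply, WithLp.prod_inner_apply]; simp only [WithLp.ofLp_fst, WithLp.ofLp_snd]; rw [hlp, ha]
      have h1 : (inner ℂ (T x.fst) (T x.fst) : ℂ)
          = inner ℂ x.fst ((adjoint T * T) x.fst) := by
        rw [mul_apply_eq_comp, adjoint_inner_right]
      have h2 : (inner ℂ (D x.fst) (D x.fst) : ℂ)
          = inner ℂ x.fst ((D * D) x.fst) := by
        have h2' := adjoint_inner_right D x.fst (D x.fst)
        rw [hDadj] at h2'
        rw [mul_apply_eq_comp, ← h2']
      rw [h1, h2, ← add_assoc, ← inner_add_right, hD2]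
      congr 1
      simp
    rw [norm_eq_sqrt_re_inner (𝕜 := ℂ) (V7 x), norm_eq_sqrt_re_inner (𝕜 := ℂ) x, key]
  · intro i
    set j := rev i with hj
    have hji : rev j = i := by
      have := i.2
      simp only [rev, hj, Fin.ext_iff]
      omega
    ext x
    refine ext_inner_right ℂ fun z => ?_
    rw [ContinuousLinearMap.comp_apply, adjoint_inner_left]
    -- unpack coefficientwise data
    have hia := hVa i x
    have hib := hVb i x
    have hic := hVc i x
    have hja := hVa j z
    have hjb := hVb j z
    have hjc := hVc j z
    have h7a := hV7a x
    have h7b := hV7b x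
    have h7c := hV7c x
    simp only [WithLp.equiv_apply, WithLp.ofLp_fst, WithLp.ofLp_snd, hji, ← hj] at hia hib hic hja hjb hjc h7a h7b h7c
    -- summability facts
    have hd : Summable fun n => (inner ℂ (F i (x.snd n)) (z.snd n) : ℂ) :=
      summable_inner_op (F i) x.snd z.snd
    have hd1 : Summable fun n => (inner ℂ (F i (x.snd (n + 1))) (z.snd (n + 1)) : ℂ) :=
      (summable_nat_add_iff 1).2 hd
    have ha1 : Summable fun n => (inner ℂ ((V i x).snd (n + 1)) (z.snd (n + 1)) : ℂ) :=
      (summable_nat_add_iff 1).2 (lp.summable_inner (𝕜 := ℂ) _ _)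
    have hcsum : Summable fun n =>
        (inner ℂ (adjoint (F j) (x.snd n)) (z.snd (n + 1)) : ℂ) := by
      have heq : (fun n => (inner ℂ (adjoint (F j) (x.snd n)) (z.snd (n + 1)) : ℂ))
          = fun n => (inner ℂ ((V i x).snd (n + 1)) (z.snd (n + 1)) : ℂ)
            - inner ℂ (F i (x.snd (n + 1))) (z.snd (n + 1)) := by
        funext n
        rw [hic n, inner_add_left]
        ring
      rw [heq]
      exact ha1.sub hd1
    -- expand both sides
    rw [WithLp.prod_inner_apply, WithLp.prod_inner_apply]; simp only [WithLp.ofLp_fst, WithLp.ofLp_snd]; rw [lp.inner_eq_tsum, lp.inner_eq_tsum,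
      (lp.summable_inner (𝕜 := ℂ) (V i x).snd z.snd).tsum_eq_zero_add,
      (lp.summable_inner (𝕜 := ℂ) (V7 x).snd (V j z).snd).tsum_eq_zero_add]
    have hLtail : (∑' n, (inner ℂ ((V i x).snd (n + 1)) (z.snd (n + 1)) : ℂ))
        = (∑' n, (inner ℂ (F i (x.snd (n + 1))) (z.snd (n + 1)) : ℂ))
          + ∑' n, (inner ℂ (adjoint (F j) (x.snd n)) (z.snd (n + 1)) : ℂ) := by
      rw [← hd1.tsum_add hcsum]
      exact tsum_congr fun n => by rw [hic n, inner_add_left]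
    have hRtail : (∑' n, (inner ℂ ((V7 x).snd (n + 1)) ((V j z).snd (n + 1)) : ℂ))
        = (∑' n, (inner ℂ (adjoint (F j) (x.snd n)) (z.snd (n + 1)) : ℂ))
          + ∑' n, (inner ℂ (F i (x.snd n)) (z.snd n) : ℂ) := by
      rw [← hcsum.tsum_add hd]
      refine tsum_congr fun n => ?_
      rw [h7c n, hjc n, inner_add_right, adjoint_inner_left, adjoint_inner_right]
    have hdsplit : (∑' n, (inner ℂ (F i (x.snd n)) (z.snd n) : ℂ))
        = inner ℂ (F i (x.snd 0)) (z.snd 0)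
          + ∑' n, (inner ℂ (F i (x.snd (n + 1))) (z.snd (n + 1)) : ℂ) :=
      hd.tsum_eq_zero_add
    rw [hLtail, hRtail, hdsplit, hia, hib, hja, hjb, h7a, h7b]
    rw [inner_add_left, inner_add_right]
    have e1 : (inner ℂ (adjoint (F j) (D x.fst)) (z.snd 0) : ℂ)
        = inner ℂ (D x.fst) (F j (z.snd 0)) := adjoint_inner_left _ _ _
    have e2 : (inner ℂ (T x.fst) (Top j z.fst) : ℂ)
        = inner ℂ (adjoint (Top j) (T x.fst)) z.fst := (adjoint_inner_left _ _ _).symm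
    have e3 : (inner ℂ (D x.fst) (adjoint (F i) (D z.fst)) : ℂ)
        = inner ℂ (D (F i (D x.fst))) z.fst := by
      rw [adjoint_inner_right, ← hDadj, adjoint_inner_left, hDadj]
    have e4 : Top i x.fst = adjoint (Top j) (T x.fst) + D (F i (D x.fst)) := by
      have h := hfund i
      rw [← hj, sub_eq_iff_eq_add] at h
      calc Top i x.fst = (D * F i * D + adjoint (Top j) * T) x.fst := by rw [← h]
      _ = _ := by simp [mul_apply]; abel
    rw [e1, e2, e3, e4, inner_add_left]
    ring
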